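/- Let n be even and let P be the path on vertices 1, 2, ..., n (with edges {i, i+1}). Let P' be the path obtained by swapping the labels of the vertices n/2 and n/2 + 1. Then for every k ≥ n/2 + 1, P and P' have exactly the same collections of connected k-sets (vertex subsets of size k inducing a connected subgraph). In particular, an n-vertex path is not determined by its connected k-sets for k ≥ n/2 + 1. -/

import Mathlib

open SimpleGraph

/-- The path graph with vertices `1, …, n` (inside `ℕ`) and edges `{i, i+1}`. -/
def pathOn (n : ℕ) : SimpleGraph ℕ where
  Adj i j := (j = i + 1 ∨ i = j + 1) ∧ 1 ≤ i ∧ i ≤ n ∧ 1 ≤ j ∧ j ≤ n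
  symm := ⟨by intro i j h; exact ⟨h.1.symm, h.2.2.2.1, h.2.2.2.2, h.2.1, h.2.2.1⟩⟩
  loopless := ⟨by intro i h; omega⟩

/-- Isomorphism between an induced subgraph of a mapped graph and the
corresponding induced subgraph of the original graph. -/
def mapInduceIso (G : SimpleGraph ℕ) (e : ℕ ≃ ℕ) (S : Set ℕ) :
    G.induce (e ⁻¹' S) ≃g (G.map e.toEmbedding).induce S where
  toEquiv := e.subtypeEquiv (fun _ => Iff.rfl)
  map_rel_iff' := by
    intro a b
    simp only [Equiv.subtypeEquiv_apply, comap_adj, Function.Embedding.coe_subtype,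
      map_adj, Equiv.coe_toEmbedding]
    constructor
    · rintro ⟨-, u, v, h, hu, hv⟩
      have hu' : u = ↑a := e.injective hu
      have hv' : v = ↑b := e.injective hv
      rw [hu', hv'] at h; exact h
    · intro h; exact ⟨fun hab => h.ne (e.injective hab), a, b, h, rfl, rfl⟩

lemma connected_map_induce_iff (G : SimpleGraph ℕ) (e : ℕ ≃ ℕ) (S : Set ℕ) :
    ((G.map e.toEmbedding).induce S).Connected ↔ (G.induce (e ⁻¹' S)).Connected :=
  ((mapInduceIso G e S).connected_iff).symm

/-- Every vertex of a connected set with at least two elements lies in `[1, n]`. -/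
lemma mem_range_of_connected {n : ℕ} {S : Finset ℕ}
    (h : ((pathOn n).induce (S : Set ℕ)).Connected) (h2 : 2 ≤ S.card)
    {v : ℕ} (hv : v ∈ S) : 1 ≤ v ∧ v ≤ n := by
  obtain ⟨w, hw, hwv⟩ : ∃ w ∈ S, w ≠ v := by
    by_contra hc
    push_neg at hc
    have hsub : S ⊆ {v} := fun x hx => Finset.mem_singleton.2 (hc x hx)
    have := Finset.card_le_card hsub
    simp at this; omega
  obtain ⟨p⟩ := h.preconnected ⟨v, by simpa using hv⟩ ⟨w, by simpa using hw⟩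
  cases p with
  | nil => exact absurd rfl hwv
  | cons h' _ =>
    have hadj : (pathOn n).Adj v _ := h'
    exact ⟨hadj.2.1, hadj.2.2.1⟩

/-- The "less than c" predicate is invariant along walks avoiding `c`. -/
lemma walk_invariant {n c : ℕ} {S : Finset ℕ} (hcS : c ∉ S)
    {a b : ↥(S : Set ℕ)} (p : ((pathOn n).induce (S : Set ℕ)).Walk a b) :
    ((a : ℕ) < c ↔ (b : ℕ) < c) := by
  induction p with
  | nil => exact Iff.rfl
  | @cons u x y hxy pw ih =>
    have hadj : (pathOn n).Adj ↑u ↑x := hxy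
    have hu : (u : ℕ) ≠ c := fun h => hcS (by rw [← h]; exact_mod_cast u.2)
    have hx : (x : ℕ) ≠ c := fun h => hcS (by rw [← h]; exact_mod_cast x.2)
    have step : ((u : ℕ) < c ↔ (x : ℕ) < c) := by
      obtain ⟨hd, _⟩ := hadj
      omega
    exact step.trans ih

/-- If a connected set avoids `c`, it is entirely below or entirely above `c`. -/
lemma split_of_not_mem {n c : ℕ} {S : Finset ℕ} (hcS : c ∉ S)
    (h : ((pathOn n).induce (S : Set ℕ)).Connected) :
    (∀ x ∈ S, x < c) ∨ (∀ x ∈ S, c < x) := by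
  obtain ⟨⟨v0, hv0⟩⟩ := h.nonempty
  have hv0S : v0 ∈ S := by simpa using hv0
  by_cases hlt : v0 < c
  · left
    intro x hx
    obtain ⟨p⟩ := h.preconnected ⟨v0, hv0⟩ ⟨x, by simpa using hx⟩
    exact (walk_invariant hcS p).1 hlt
  · right
    intro x hx
    obtain ⟨p⟩ := h.preconnected ⟨v0, hv0⟩ ⟨x, by simpa using hx⟩
    have hnx : ¬ (x < c) := fun hc' => hlt ((walk_invariant hcS p).2 hc')
    have hxc : x ≠ c := fun h' => hcS (h' ▸ hx)
    omega

/-- Key lemma: a connected set of size `≥ n/2 + 1` contains both `n/2` and `n/2+1`. -/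
lemma key_mem {n m k : ℕ} (hm : n = 2 * m) (hm1 : 1 ≤ m) (hk : m + 1 ≤ k)
    {S : Finset ℕ} (hS : S.card = k)
    (h : ((pathOn n).induce (S : Set ℕ)).Connected) : m ∈ S ∧ m + 1 ∈ S := by
  have h2 : 2 ≤ S.card := by omega
  have hrange : ∀ v ∈ S, 1 ≤ v ∧ v ≤ n := fun v hv => mem_range_of_connected h h2 hv
  have aux : ∀ c, 1 ≤ c → c ≤ n → c ∉ S → S.card ≤ max (c - 1) (n - c) := by
    intro c hc1 hcn hcS
    rcases split_of_not_mem hcS h with hall | hall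
    · have hsub : S ⊆ Finset.Icc 1 (c - 1) := by
        intro x hx
        have h1 := hrange x hx
        have h2 := hall x hx
        simp only [Finset.mem_Icc]; omega
      have := Finset.card_le_card hsub
      rw [Nat.card_Icc] at this
      omega
    · have hsub : S ⊆ Finset.Icc (c + 1) n := by
        intro x hx
        have h1 := hrange x hx
        have h2 := hall x hx
        simp only [Finset.mem_Icc]; omega
      have := Finset.card_le_card hsub
      rw [Nat.card_Icc] at this
      omega
  constructor
  · by_contra hc
    have := aux m hm1 (by omega) hc
    omega
  · by_contra hc
    have := aux (m + 1) (by omega) (by omega) hc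
    omega

/-- A swap fixes (setwise) any finset containing both swapped points. -/
lemma swap_image_fix {m : ℕ} {T : Finset ℕ} (h1 : m ∈ T) (h2 : m + 1 ∈ T) :
    T.image (Equiv.swap m (m + 1)) = T := by
  ext x
  simp only [Finset.mem_image]
  constructor
  · rintro ⟨y, hy, rfl⟩
    rcases eq_or_ne y m with rfl | hym
    · rwa [Equiv.swap_apply_left]
    rcases eq_or_ne y (m + 1) with rfl | hym1
    · rwa [Equiv.swap_apply_right]
    · rwa [Equiv.swap_apply_of_ne_of_ne hym hym1]
  · intro hx
    refine ⟨Equiv.swap m (m + 1) x, ?_, Equiv.swap_apply_self _ _ _⟩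
    rcases eq_or_ne x m with rfl | hxm
    · rwa [Equiv.swap_apply_left]
    rcases eq_or_ne x (m + 1) with rfl | hxm1
    · rwa [Equiv.swap_apply_right]
    · rwa [Equiv.swap_apply_of_ne_of_ne hxm hxm1]

lemma swap_preimage_coe (m : ℕ) (S : Finset ℕ) :
    ⇑(Equiv.swap m (m + 1)) ⁻¹' (S : Set ℕ)
      = ((S.image (Equiv.swap m (m + 1)) : Finset ℕ) : Set ℕ) := by
  rw [Finset.coe_image]
  ext x
  simp only [Set.mem_preimage, Set.mem_image, Finset.mem_coe]
  constructor
  · intro hx; exact ⟨Equiv.swap m (m + 1) x, hx, Equiv.swap_apply_self _ _ _⟩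
  · rintro ⟨y, hy, rfl⟩; rwa [Equiv.swap_apply_self]

theorem stmt16 (n : ℕ) (hn : Even n) (k : ℕ) (hk : n / 2 + 1 ≤ k)
    (S : Finset ℕ) (hS : S.card = k) :
    ((pathOn n).induce (S : Set ℕ)).Connected ↔
      (((pathOn n).map (Equiv.swap (n / 2) (n / 2 + 1)).toEmbedding).induce
        (S : Set ℕ)).Connected := by
  rcases Nat.eq_zero_or_pos n with hn0 | hnpos
  · subst hn0
    have hbot : (pathOn 0).map (Equiv.swap (0 / 2) (0 / 2 + 1)).toEmbedding = pathOn 0 := by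
      ext i j
      simp only [map_adj, Equiv.coe_toEmbedding]
      constructor
      · rintro ⟨-, u, v, ⟨-, h1, h2, -⟩, -, -⟩; exact absurd h2 (by omega)
      · rintro ⟨-, h1, h2, -⟩; exact absurd h2 (by omega)
    rw [hbot]
  set m := n / 2 with hmdef
  have hn2m : n = 2 * m := by
    obtain ⟨r, hr⟩ := hn
    omega
  have hm1 : 1 ≤ m := by omega
  rw [connected_map_induce_iff, swap_preimage_coe]
  constructor
  · intro h
    have hmem := key_mem hn2m hm1 hk hS h
    rw [swap_image_fix hmem.1 hmem.2]
    exact h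
  · intro h
    have hcard : (S.image (Equiv.swap m (m + 1))).card = k := by
      rw [Finset.card_image_of_injective _ (Equiv.swap m (m + 1)).injective, hS]
    have hmem := key_mem hn2m hm1 hk hcard h
    have hTfix := swap_image_fix hmem.1 hmem.2
    have hSS : (S.image (Equiv.swap m (m + 1))).image (Equiv.swap m (m + 1)) = S := by
      rw [Finset.image_image,
        show (⇑(Equiv.swap m (m + 1)) ∘ ⇑(Equiv.swap m (m + 1))) = id from
          funext fun x => Equiv.swap_apply_self _ _ x,
        Finset.image_id]
    rw [← hSS, hTfix]
    exact h
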